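/- Let n and p be real numbers with n > p > 1, and define u : (0,1] → ℝ by u(r) = -p·log r. Then u'(r) = -p/r < 0 for all r ∈ (0,1], the function r ↦ r^{n-1}|u'(r)|^{p-2}u'(r) has derivative equal to -r^{n-1}·p^{p-1}(n-p)·e^{u(r)} at every r ∈ (0,1), and ∫_0^1 r^{n-1}(|u(r)|^p + |u'(r)|^p) dr < ∞. -/

import Mathlib

open MeasureTheory Set Real Filter


theorem stmt11 (n p : ℝ) (hp : 1 < p) (hn : p < n) :
    (∀ r ∈ Ioc (0:ℝ) 1,
      HasDerivAt (fun s : ℝ => -p * Real.log s) (-p / r) r ∧ -p / r < 0) ∧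
    (∀ r ∈ Ioo (0:ℝ) 1,
      HasDerivAt (fun s : ℝ => s ^ (n - 1) * |(-p / s)| ^ (p - 2) * (-p / s))
        (-(r ^ (n - 1) * (p ^ (p - 1) * (n - p)) * Real.exp (-p * Real.log r))) r) ∧
    IntegrableOn
      (fun r : ℝ => r ^ (n - 1) * (|(-p * Real.log r)| ^ p + |(-p / r)| ^ p))
      (Ioc (0:ℝ) 1) := by
  have hp0 : (0:ℝ) < p := lt_trans one_pos hp
  refine ⟨?_, ?_, ?_⟩
  · rintro r ⟨hr0, hr1⟩
    constructor
    · have h := (Real.hasDerivAt_log (ne_of_gt hr0)).const_mul (-p)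
      simpa [div_eq_mul_inv] using h
    · exact div_neg_of_neg_of_pos (neg_neg_of_pos hp0) hr0
  · rintro r ⟨hr0, hr1⟩
    have key : HasDerivAt (fun s : ℝ => -(p ^ (p - 1)) * s ^ (n - p))
        (-(p ^ (p - 1)) * ((n - p) * r ^ (n - p - 1))) r :=
      (Real.hasDerivAt_rpow_const (Or.inl (ne_of_gt hr0))).const_mul _
    have heq : (fun s : ℝ => s ^ (n - 1) * |(-p / s)| ^ (p - 2) * (-p / s))
        =ᶠ[nhds r] fun s : ℝ => -(p ^ (p - 1)) * s ^ (n - p) := by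
      filter_upwards [Ioi_mem_nhds hr0] with s hs
      have hs0 : (0:ℝ) < s := hs
      have habs : |(-p / s)| = p / s := by
        rw [abs_of_neg (div_neg_of_neg_of_pos (neg_neg_of_pos hp0) hs0)]
        ring
      have h1 : p ^ (p - 1) = p ^ (p - 2) * p := by
        rw [show p - 1 = p - 2 + 1 by ring, Real.rpow_add hp0, Real.rpow_one]
      have h2 : s ^ (n - p) = s ^ (n - 1) / s ^ (p - 2) / s := by
        rw [show n - p = n - 1 - (p - 2) - 1 by ring, Real.rpow_sub hs0,
          Real.rpow_sub hs0, Real.rpow_one]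
      have hsp : s ^ (p - 2) ≠ 0 := ne_of_gt (Real.rpow_pos_of_pos hs0 _)
      rw [habs, Real.div_rpow hp0.le hs0.le, h1, h2]
      field_simp
    have hD : -(r ^ (n - 1) * (p ^ (p - 1) * (n - p)) * Real.exp (-p * Real.log r))
        = -(p ^ (p - 1)) * ((n - p) * r ^ (n - p - 1)) := by
      have h3 : Real.exp (-p * Real.log r) = r ^ (-p) := by
        rw [Real.rpow_def_of_pos hr0, mul_comm]
      have h4 : r ^ (n - 1) * r ^ (-p) = r ^ (n - p - 1) := by
        rw [← Real.rpow_add hr0, show n - 1 + -p = n - p - 1 by ring]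
      rw [h3, ← h4]; ring
    rw [hD]
    exact key.congr_of_eventuallyEq heq
  · set ε : ℝ := (n - 1) / (2 * p) with hεdef
    have hn1 : (0:ℝ) < n - 1 := by linarith
    have hε : (0:ℝ) < ε := div_pos hn1 (by linarith)
    set C : ℝ := (p / ε) ^ p with hCdef
    have hg : IntegrableOn (fun r : ℝ => C + p ^ p * r ^ (n - p - 1)) (Ioc (0:ℝ) 1) := by
      refine (integrableOn_const ?_).add
        ((((intervalIntegral.intervalIntegrable_rpow'
          (show (-1:ℝ) < n - p - 1 by linarith)).1).const_mul _))
      simp [Real.volume_Ioc]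
    refine hg.mono' ?_ ?_
    · apply ContinuousOn.aestronglyMeasurable ?_ measurableSet_Ioc
      intro r hr
      have hr0 : (0:ℝ) < r := hr.1
      apply ContinuousAt.continuousWithinAt
      exact (continuousAt_id.rpow_const (Or.inl hr0.ne')).mul
        ((((Real.continuousAt_log hr0.ne').const_mul (-p)).abs.rpow_const
            (Or.inr hp0.le)).add
          ((ContinuousAt.div continuousAt_const continuousAt_id hr0.ne').abs.rpow_const
            (Or.inr hp0.le)))
    · filter_upwards [ae_restrict_mem measurableSet_Ioc] with r hr
      obtain ⟨hr0, hr1⟩ := hr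
      have hrn : (0:ℝ) ≤ r ^ (n - 1) := Real.rpow_nonneg hr0.le _
      have hlog : |(-p * Real.log r)| = p * (-Real.log r) := by
        rw [abs_mul, abs_of_neg (neg_neg_of_pos hp0),
          abs_of_nonpos (Real.log_nonpos hr0.le hr1)]
        ring
      have hbound : -Real.log r ≤ r ^ (-ε) / ε := by
        calc -Real.log r = Real.log r⁻¹ := (Real.log_inv r).symm
          _ ≤ (r⁻¹) ^ ε / ε := Real.log_le_rpow_div (le_of_lt (inv_pos.2 hr0)) hε
          _ = r ^ (-ε) / ε := by rw [Real.inv_rpow hr0.le, ← Real.rpow_neg hr0.le]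
      have hterm1 : r ^ (n - 1) * |(-p * Real.log r)| ^ p ≤ C := by
        have hb1 : |(-p * Real.log r)| ^ p ≤ ((p / ε) * r ^ (-ε)) ^ p := by
          apply Real.rpow_le_rpow (abs_nonneg _) _ hp0.le
          rw [hlog]
          calc p * (-Real.log r) ≤ p * (r ^ (-ε) / ε) :=
                mul_le_mul_of_nonneg_left hbound hp0.le
            _ = (p / ε) * r ^ (-ε) := by ring
        have hb2 : ((p / ε) * r ^ (-ε)) ^ p = C * r ^ (-ε * p) := by
          rw [Real.mul_rpow (div_nonneg hp0.le hε.le) (Real.rpow_nonneg hr0.le _),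
            Real.rpow_mul hr0.le]
        calc r ^ (n - 1) * |(-p * Real.log r)| ^ p
            ≤ r ^ (n - 1) * (C * r ^ (-ε * p)) := by
              rw [← hb2]; exact mul_le_mul_of_nonneg_left hb1 hrn
          _ = C * r ^ (n - 1 + -ε * p) := by
              rw [Real.rpow_add hr0]; ring
          _ = C * r ^ ((n - 1) / 2) := by
              rw [show n - 1 + -ε * p = (n - 1) / 2 by
                rw [hεdef, neg_mul, div_mul_eq_mul_div, mul_div_mul_right _ _ hp0.ne']; ring]
          _ ≤ C * 1 := by
              apply mul_le_mul_of_nonneg_left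
                (Real.rpow_le_one hr0.le hr1 (by linarith))
                (Real.rpow_nonneg (div_nonneg hp0.le hε.le) _)
          _ = C := mul_one C
      have hterm2 : r ^ (n - 1) * |(-p / r)| ^ p = p ^ p * r ^ (n - p - 1) := by
        have habs : |(-p / r)| = p / r := by
          rw [abs_of_neg (div_neg_of_neg_of_pos (neg_neg_of_pos hp0) hr0)]; ring
        have hsplit : r ^ (n - 1) = r ^ (n - p - 1) * r ^ p := by
          rw [← Real.rpow_add hr0]; congr 1; ring
        rw [habs, Real.div_rpow hp0.le hr0.le, hsplit, mul_assoc,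
          mul_comm (r ^ p), div_mul_cancel₀ _ (ne_of_gt (Real.rpow_pos_of_pos hr0 p)),
          mul_comm]
      have hnn : (0:ℝ) ≤ r ^ (n - 1) * (|(-p * Real.log r)| ^ p + |(-p / r)| ^ p) :=
        mul_nonneg hrn (add_nonneg (Real.rpow_nonneg (abs_nonneg _) _)
          (Real.rpow_nonneg (abs_nonneg _) _))
      rw [Real.norm_eq_abs, abs_of_nonneg hnn, mul_add, hterm2]
      exact add_le_add_left hterm1 _
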